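/- Let X be a Banach space with basis (e_n) of basis constant λ, and biorthogonal functionals (e_n*). Let (b_n), (b_n*) be block bases of (e_n) and (e_n*) respectively, with b_m*(b_n) = δ_{m,n}, and suppose for some C ≥ 1 that ‖∑ ξⱼ bⱼ‖ ≤ √C ‖∑ ξⱼ eⱼ‖ and ‖∑ ξⱼ bⱼ*‖ ≤ √C ‖∑ ξⱼ eⱼ*‖ for all (ξⱼ) ∈ c₀₀. Then for all (ξⱼ) ∈ c₀₀ one has ‖∑ ξⱼ bⱼ‖ ≥ (1/(λ√C)) ‖∑ ξⱼ eⱼ‖, so (b_n) is λC-impartially equivalent to (e_n). -/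

import Mathlib

open Filter Topology

/-- Lower estimate for block bases: under the hypotheses of the projection lemma, for
all finitely supported scalars `(ξ j)` one has
`‖∑ ξⱼ bⱼ‖ ≥ (1/(λ√C)) ‖∑ ξⱼ eⱼ‖`, so `(b n)` is `λC`-impartially equivalent to `(e n)`. -/
theorem stmt_7 {X : Type*} [NormedAddCommGroup X] [NormedSpace ℝ X] [CompleteSpace X]
    (e : ℕ → X) (estar : ℕ → X →L[ℝ] ℝ)
    (hbie : ∀ i j, estar i (e j) = if i = j then 1 else 0)
    (hdense : (Submodule.span ℝ (Set.range e)).topologicalClosure = ⊤)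
    (lam : ℝ) (hlam : 1 ≤ lam)
    (hbasis : ∀ (c : ℕ →₀ ℝ) (N : ℕ),
      ‖∑ j ∈ c.support.filter (· < N), c j • e j‖ ≤ lam * ‖∑ j ∈ c.support, c j • e j‖)
    (b : ℕ → X) (bstar : ℕ → X →L[ℝ] ℝ)
    (hbne : ∀ n, b n ≠ 0) (hbstarne : ∀ n, bstar n ≠ 0)
    (hblockb : ∃ k : ℕ → ℕ, StrictMono k ∧
      ∀ n, b n ∈ Submodule.span ℝ (e '' Set.Ico (k n) (k (n + 1))))
    (hblockbstar : ∃ k : ℕ → ℕ, StrictMono k ∧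
      ∀ n, bstar n ∈ Submodule.span ℝ (estar '' Set.Ico (k n) (k (n + 1))))
    (hbi : ∀ m n, bstar m (b n) = if m = n then 1 else 0)
    (C : ℝ) (hC : 1 ≤ C)
    (hCb : ∀ c : ℕ →₀ ℝ,
      ‖∑ j ∈ c.support, c j • b j‖ ≤ Real.sqrt C * ‖∑ j ∈ c.support, c j • e j‖)
    (hCbstar : ∀ c : ℕ →₀ ℝ,
      ‖∑ j ∈ c.support, c j • bstar j‖ ≤ Real.sqrt C * ‖∑ j ∈ c.support, c j • estar j‖) :
    ∀ c : ℕ →₀ ℝ,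
      (1 / (lam * Real.sqrt C)) * ‖∑ j ∈ c.support, c j • e j‖ ≤
        ‖∑ j ∈ c.support, c j • b j‖ := by
  have hlam0 : (0:ℝ) < lam := lt_of_lt_of_le one_pos hlam
  have hsC : (0:ℝ) < Real.sqrt C := Real.sqrt_pos.2 (lt_of_lt_of_le one_pos hC)
  -- Projection norm bound
  have hP : ∀ N : ℕ, ∀ z : X,
      ‖∑ j ∈ Finset.range N, estar j z • e j‖ ≤ lam * ‖z‖ := by
    intro N
    set P : X →L[ℝ] X := ∑ j ∈ Finset.range N, (estar j).smulRight (e j) with hPdef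
    have hPapp : ∀ z, P z = ∑ j ∈ Finset.range N, estar j z • e j := by
      intro z
      simp [hPdef, ContinuousLinearMap.sum_apply]
    have hclosed : IsClosed {z : X | ‖P z‖ ≤ lam * ‖z‖} :=
      isClosed_le P.continuous.norm (continuous_const.mul continuous_norm)
    have hspan : (Submodule.span ℝ (Set.range e) : Set X) ⊆ {z : X | ‖P z‖ ≤ lam * ‖z‖} := by
      intro z hz
      rw [SetLike.mem_coe, Finsupp.mem_span_range_iff_exists_finsupp] at hz
      obtain ⟨c', hc'⟩ := hz
      have hz' : z = ∑ j ∈ c'.support, c' j • e j := by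
        rw [← hc']; rfl
      have hstar : ∀ j, estar j z = c' j := by
        intro j
        rw [hz', map_sum]
        simp only [map_smul, hbie, smul_eq_mul, mul_ite, mul_one, mul_zero]
        rw [Finset.sum_ite_eq]
        split_ifs with hj
        · rfl
        · exact (Finsupp.notMem_support_iff.1 hj).symm
      have heq : ∑ j ∈ Finset.range N, estar j z • e j
          = ∑ j ∈ c'.support.filter (· < N), c' j • e j := by
        rw [Finset.sum_subset (s₁ := c'.support.filter (· < N)) (s₂ := Finset.range N)]
        · exact Finset.sum_congr rfl fun j _ => by rw [hstar]
        · intro j hj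
          simp only [Finset.mem_filter, Finset.mem_range] at hj ⊢
          exact hj.2
        · intro j hj hj'
          simp only [Finset.mem_filter, Finset.mem_range, Finsupp.mem_support_iff] at hj hj'
          have hc0 : c' j = 0 := by
            by_contra h
            exact hj' ⟨h, hj⟩
          rw [hc0, zero_smul]
      simp only [Set.mem_setOf_eq, hPapp, heq]
      calc ‖∑ j ∈ c'.support.filter (· < N), c' j • e j‖
          ≤ lam * ‖∑ j ∈ c'.support, c' j • e j‖ := hbasis c' N
        _ = lam * ‖z‖ := by rw [← hz']
    intro z
    have hzcl : z ∈ closure (Submodule.span ℝ (Set.range e) : Set X) := by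
      have huniv : (closure (Submodule.span ℝ (Set.range e) : Set X)) = Set.univ := by
        have h2 := congrArg (fun S : Submodule ℝ X => (S : Set X)) hdense
        simpa [Submodule.topologicalClosure_coe] using h2
      rw [huniv]; trivial
    have hzz := (IsClosed.closure_subset_iff hclosed).2 hspan hzcl
    simpa [hPapp] using hzz
  intro c
  set S := c.support with hS
  set x := ∑ j ∈ S, c j • e j with hx
  set y := ∑ j ∈ S, c j • b j with hy
  rcases eq_or_ne x 0 with h0 | h0
  · rw [h0, norm_zero, mul_zero]
    exact norm_nonneg _
  obtain ⟨f, hf1, hfx⟩ := exists_dual_vector ℝ x (norm_ne_zero_iff.2 h0)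
  set N : ℕ := S.sup id + 1 with hN
  have hSN : ∀ j ∈ S, j < N := fun j hj =>
    Nat.lt_succ_of_le (Finset.le_sup (f := id) hj)
  set d : ℕ →₀ ℝ := Finsupp.onFinset (Finset.range N)
      (fun j => if j < N then f (e j) else 0)
      (fun j hj => by
        simp only [Finset.mem_range]
        by_contra h
        simp [h] at hj) with hd
  have hdapp : ∀ j, d j = if j < N then f (e j) else 0 := fun j => rfl
  have hdsupp : d.support ⊆ Finset.range N := Finsupp.support_onFinset_subset
  -- h(y) = f(x) = ‖x‖
  have hyval : (∑ j ∈ d.support, d j • bstar j) y = ‖x‖ := by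
    have hby : ∀ j, bstar j y = c j := by
      intro j
      rw [hy, map_sum]
      simp only [map_smul, hbi, smul_eq_mul, mul_ite, mul_one, mul_zero]
      rw [Finset.sum_ite_eq]
      split_ifs with hj
      · rfl
      · exact (Finsupp.notMem_support_iff.1 hj).symm
    have h1 : (∑ j ∈ d.support, d j • bstar j) y = ∑ j ∈ d.support, d j * c j := by
      simp [ContinuousLinearMap.sum_apply, hby]
    have h2 : f x = ∑ j ∈ S, d j * c j := by
      rw [hx, map_sum]
      refine Finset.sum_congr rfl fun j hj => ?_
      rw [map_smul, hdapp, if_pos (hSN j hj)]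
      simp [mul_comm]
    have hA : ∑ j ∈ d.support ∪ S, d j * c j = ∑ j ∈ d.support, d j * c j :=
      (Finset.sum_subset Finset.subset_union_left (fun j _ hj' => by
        rw [Finsupp.notMem_support_iff.1 hj', zero_mul])).symm
    have hB : ∑ j ∈ d.support ∪ S, d j * c j = ∑ j ∈ S, d j * c j :=
      (Finset.sum_subset Finset.subset_union_right (fun j _ hj' => by
        rw [hS] at hj'
        rw [Finsupp.notMem_support_iff.1 hj', mul_zero])).symm
    rw [h1, ← hA, hB, ← h2, hfx]
    simp
  -- norm of the estar-combination
  have hgnorm : ‖∑ j ∈ d.support, d j • estar j‖ ≤ lam := by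
    refine ContinuousLinearMap.opNorm_le_bound _ hlam0.le fun z => ?_
    have hval : (∑ j ∈ d.support, d j • estar j) z
        = f (∑ j ∈ Finset.range N, estar j z • e j) := by
      rw [map_sum]
      simp only [ContinuousLinearMap.sum_apply, ContinuousLinearMap.smul_apply,
        smul_eq_mul, map_smul]
      rw [Finset.sum_subset hdsupp]
      · refine Finset.sum_congr rfl fun j hj => ?_
        rw [hdapp, if_pos (Finset.mem_range.1 hj)]
        ring
      · intro j _ hj'
        rw [Finsupp.notMem_support_iff.1 hj', zero_mul]
    rw [hval]
    calc ‖f (∑ j ∈ Finset.range N, estar j z • e j)‖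
        ≤ ‖f‖ * ‖∑ j ∈ Finset.range N, estar j z • e j‖ := f.le_opNorm _
      _ = ‖∑ j ∈ Finset.range N, estar j z • e j‖ := by rw [hf1, one_mul]
      _ ≤ lam * ‖z‖ := hP N z
  have hhnorm : ‖∑ j ∈ d.support, d j • bstar j‖ ≤ Real.sqrt C * lam :=
    (hCbstar d).trans (mul_le_mul_of_nonneg_left hgnorm hsC.le)
  have hmain : ‖x‖ ≤ (Real.sqrt C * lam) * ‖y‖ := by
    calc ‖x‖ = (∑ j ∈ d.support, d j • bstar j) y := hyval.symm
      _ ≤ ‖(∑ j ∈ d.support, d j • bstar j) y‖ := le_abs_self _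
      _ ≤ ‖∑ j ∈ d.support, d j • bstar j‖ * ‖y‖ :=
          ContinuousLinearMap.le_opNorm _ _
      _ ≤ (Real.sqrt C * lam) * ‖y‖ :=
          mul_le_mul_of_nonneg_right hhnorm (norm_nonneg _)
  rw [one_div, inv_mul_le_iff₀ (by positivity)]
  calc ‖x‖ ≤ (Real.sqrt C * lam) * ‖y‖ := hmain
    _ = lam * Real.sqrt C * ‖y‖ := by ring
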